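/- Let P ∈ ℂ[x] be a polynomial and N ≥ 1 an integer such that x·P(x^N) + 1 has no roots on the unit circle. Then m(1 + (-1)^{N+1}/(x·P(x)^N)) = N · m(1 + 1/(x·P(x^N))), where m denotes the logarithmic Mahler measure given by the integral m(F) = (1/2π)∫₀^{2π} log|F(e^{iθ})| dθ. -/

import Mathlib

open Polynomial Real

/-- Logarithmic Mahler measure of a function on the unit circle. -/
noncomputable def logMahler (F : ℂ → ℂ) : ℝ :=
  (1 / (2 * π)) * ∫ θ in (0 : ℝ)..(2 * π), Real.log ‖F (Complex.exp (θ * Complex.I))‖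

open MeasureTheory Set intervalIntegral

lemma ii_log_abs01 : IntervalIntegrable (fun x : ℝ => Real.log |x|) volume 0 1 := by
  have hg : ∀ x ∈ Ioo (0:ℝ) 1, HasDerivAt (fun x : ℝ => x - x * Real.log x)
      (-Real.log x) x := by
    intro x hx
    have h1 := (hasDerivAt_id x).sub (Real.hasDerivAt_mul_log (ne_of_gt hx.1))
    exact h1.congr_deriv (by ring)
  have hcont : ContinuousOn (fun x : ℝ => x - x * Real.log x) (uIcc (0:ℝ) 1) :=
    (continuous_id.sub Real.continuous_mul_log).continuousOn
  have hpos : ∀ x ∈ Ioo (min (0:ℝ) 1) (max 0 1), 0 ≤ -Real.log x := by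
    intro x hx
    simp only [min_self, min_eq_left, zero_le_one, max_eq_right] at hx
    have : Real.log x ≤ 0 := Real.log_nonpos (le_of_lt hx.1) (le_of_lt hx.2)
    linarith
  have h2 : IntervalIntegrable (fun x : ℝ => -Real.log x) volume 0 1 := by
    apply intervalIntegrable_deriv_of_nonneg hcont
    · intro x hx
      exact hg x (by simpa using hx)
    · exact hpos
  have h3 : IntervalIntegrable (fun x : ℝ => Real.log x) volume 0 1 := by
    have h2' := h2.neg
    have : (-fun x : ℝ => -Real.log x) = fun x : ℝ => Real.log x := by
      funext x; simp
    rwa [this] at h2'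
  rw [intervalIntegrable_iff_integrableOn_Ioc_of_le (by norm_num)] at h3 ⊢
  exact h3.congr_fun (fun x hx => by rw [abs_of_pos hx.1]) measurableSet_Ioc

lemma ii_log_abs (a b : ℝ) : IntervalIntegrable (fun x : ℝ => Real.log |x|) volume a b := by
  have base : ∀ c : ℝ, 0 < c → IntervalIntegrable (fun x : ℝ => Real.log |x|) volume 0 c := by
    intro c hc
    rcases le_or_gt c 1 with h | h
    · exact ii_log_abs01.mono_set (by
        rw [uIcc_of_le hc.le, uIcc_of_le (by norm_num : (0:ℝ) ≤ 1)]
        exact Icc_subset_Icc le_rfl h)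
    · refine ii_log_abs01.trans (ContinuousOn.intervalIntegrable ?_)
      apply ContinuousOn.log (continuous_abs.continuousOn)
      intro x hx
      rw [uIcc_of_le h.le] at hx
      have : (1:ℝ) ≤ x := hx.1
      positivity
  have all0 : ∀ c : ℝ, IntervalIntegrable (fun x : ℝ => Real.log |x|) volume 0 c := by
    intro c
    rcases lt_trichotomy c 0 with h | h | h
    · have h1 := (IntervalIntegrable.iff_comp_neg (by exact enorm_ne_top)).mp (base (-c) (by linarith))
      simp only [abs_neg, neg_zero, neg_neg] at h1
      exact h1
    · simp [h]
    · exact base c h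
  exact ((all0 a).symm).trans (all0 b)

lemma ii_of_periodic {f : ℝ → ℝ} {T c : ℝ} (hT : 0 < T) (hp : Function.Periodic f T)
    (h : IntervalIntegrable f volume c (c + T)) (a b : ℝ) :
    IntervalIntegrable f volume a b := by
  have shift : ∀ k : ℤ, IntervalIntegrable f volume (c + k * T) (c + k * T + T) := by
    intro k
    have h1 := h.comp_sub_right (k * T)
    have h2 : (fun x => f (x - (k : ℝ) * T)) = f := by
      funext x; exact hp.sub_int_mul_eq k
    rw [h2] at h1
    have : c + T + (k : ℝ) * T = c + (k : ℝ) * T + T := by ring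
    rwa [this] at h1
  have chain : ∀ (n : ℕ) (k : ℤ), IntervalIntegrable f volume (c + k * T)
      (c + k * T + n * T) := by
    intro n
    induction n with
    | zero => intro k; simp
    | succ n ih =>
      intro k
      have e1 : c + (k : ℝ) * T + (n : ℝ) * T = c + ((k + n : ℤ) : ℝ) * T := by
        push_cast; ring
      have e2 : c + ((k + n : ℤ) : ℝ) * T + T = c + (k : ℝ) * T + ((n : ℕ) + 1 : ℕ) * T := by
        push_cast; ring
      have := (ih k).trans (e1 ▸ shift (k + n))
      have e3 : c + (k : ℝ) * T + (n : ℝ) * T + T = c + (k : ℝ) * T + ((n : ℕ) + 1 : ℕ) * T := by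
        push_cast; ring
      rwa [e3] at this
  set k : ℤ := ⌊(min a b - c) / T⌋ with hk
  have hk1 : c + (k : ℝ) * T ≤ min a b := by
    have := Int.floor_le ((min a b - c) / T)
    rw [le_div_iff₀ hT] at this
    linarith
  obtain ⟨n, hn⟩ := exists_nat_ge ((max a b - c - k * T) / T)
  have hn1 : max a b ≤ c + (k : ℝ) * T + n * T := by
    rw [div_le_iff₀ hT] at hn
    linarith
  have hsub : Set.uIcc a b ⊆ Set.uIcc (c + (k:ℝ) * T) (c + (k:ℝ) * T + n * T) := by
    rw [Set.uIcc_subset_uIcc_iff_le]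
    have hle : c + (k:ℝ) * T ≤ c + (k:ℝ) * T + n * T :=
      le_trans (hk1.trans (min_le_max)) hn1
    rw [min_eq_left hle, max_eq_right hle]
    exact ⟨hk1, hn1⟩
  exact (chain n k).mono_set hsub

lemma ii_log_abs_sub (β a b : ℝ) :
    IntervalIntegrable (fun x : ℝ => Real.log |x - β|) volume a b := by
  have h := (ii_log_abs (a - β) (b - β)).comp_sub_right β
  simpa using h

lemma abs_exp_sub_one (t : ℝ) :
    ‖Complex.exp (t * Complex.I) - 1‖ = 2 * |Real.sin (t / 2)| := by
  have h1 : Complex.exp (t * Complex.I) - 1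
      = Complex.ofReal (Real.cos t - 1) + Complex.ofReal (Real.sin t) * Complex.I := by
    rw [Complex.exp_mul_I]
    push_cast
    ring
  rw [h1, Complex.norm_add_mul_I]
  have h2 : (Real.cos t - 1) ^ 2 + Real.sin t ^ 2 = (2 * |Real.sin (t / 2)|) ^ 2 := by
    have h3 := Real.sin_sq_eq_half_sub (t / 2)
    have h4 : 2 * (t / 2) = t := by ring
    rw [h4] at h3
    have h5 := Real.sin_sq_add_cos_sq t
    have h6 : |Real.sin (t/2)| ^ 2 = Real.sin (t/2) ^ 2 := sq_abs _
    nlinarith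
  rw [h2, Real.sqrt_sq (by positivity)]

lemma ii_log_abs_exp_sub (r : ℂ) (a b : ℝ) :
    IntervalIntegrable (fun θ : ℝ => Real.log (‖Complex.exp (θ * Complex.I) - r‖))
      volume a b := by
  have hcont : Continuous fun θ : ℝ => ‖Complex.exp (θ * Complex.I) - r‖ :=
    continuous_norm.comp ((Complex.continuous_exp.comp (by continuity)).sub continuous_const)
  by_cases habs : ‖r‖ = 1
  · -- r on the unit circle
    set β := r.arg with hβ
    have hr : Complex.exp (β * Complex.I) = r := by
      have := Complex.norm_mul_exp_arg_mul_I r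
      rwa [habs, Complex.ofReal_one, one_mul] at this
    have key : ∀ θ : ℝ, ‖Complex.exp (θ * Complex.I) - r‖
        = 2 * |Real.sin ((θ - β) / 2)| := by
      intro θ
      have h1 : Complex.exp (θ * Complex.I) - r
          = Complex.exp (β * Complex.I) * (Complex.exp ((θ - β : ℝ) * Complex.I) - 1) := by
        rw [← hr, mul_sub, mul_one, ← Complex.exp_add]
        push_cast
        ring_nf
      rw [h1, norm_mul, Complex.norm_exp_ofReal_mul_I, one_mul, abs_exp_sub_one]
    have funeq : (fun θ : ℝ => Real.log (‖Complex.exp (θ * Complex.I) - r‖))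
        = fun θ : ℝ => Real.log (2 * |Real.sin ((θ - β) / 2)|) := by
      funext θ; rw [key θ]
    rw [funeq]
    -- periodicity with period 2π
    have hp : Function.Periodic (fun θ : ℝ => Real.log (2 * |Real.sin ((θ - β) / 2)|))
        (2 * π) := by
      intro θ
      have : (θ + 2 * π - β) / 2 = (θ - β) / 2 + π := by ring
      simp only [this, Real.sin_add_pi, abs_neg]
    refine ii_of_periodic (c := β - π) Real.two_pi_pos hp ?_ a b
    -- base interval: β - π .. β - π + 2π = β + π
    have hC : (0:ℝ) ≤ Real.log (π / 2) := by
      apply Real.log_nonneg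
      have := Real.pi_gt_three
      linarith
    have hbase : IntervalIntegrable
        (fun θ : ℝ => Real.log (2 * |Real.sin ((θ - β) / 2)|)) volume (β - π) (β - π + 2 * π) := by
      have hβπ : β - π + 2 * π = β + π := by ring
      rw [hβπ]
      have hdiff : IntervalIntegrable
          (fun θ : ℝ => Real.log (2 * |Real.sin ((θ - β) / 2)|) - Real.log |θ - β|)
          volume (β - π) (β + π) := by
        apply IntervalIntegrable.mono_fun'
          (g := fun _ : ℝ => Real.log (π / 2)) (intervalIntegrable_const)
        · apply Measurable.aestronglyMeasurable
          apply Measurable.sub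
          · exact Real.measurable_log.comp
              ((continuous_const.mul ((Real.continuous_sin.comp
                (by continuity)).abs)).measurable)
          · exact Real.measurable_log.comp ((continuous_abs.comp (by continuity)).measurable)
        · filter_upwards [MeasureTheory.ae_restrict_mem measurableSet_uIoc] with x hmem
          rw [Set.uIoc_of_le (by linarith [Real.pi_pos] : β - π ≤ β + π)] at hmem
          simp only [Real.norm_eq_abs]
          by_cases h0 : x = β
          · simp [h0, hC]
          · have hB : (0:ℝ) < |x - β| := abs_pos.2 (sub_ne_zero.2 h0)
            have hBπ : |x - β| ≤ π := abs_le.2 ⟨by linarith [hmem.1], by linarith [hmem.2]⟩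
            have hs2 : |(x - β) / 2| ≤ π / 2 := by
              rw [abs_div, abs_two]
              apply div_le_div_of_nonneg_right hBπ ?_ |>.trans_eq ?_
              · norm_num
              · norm_num
            have hs1 := Real.mul_abs_le_abs_sin hs2
            have hlow : 2 / π * |x - β| ≤ 2 * |Real.sin ((x - β) / 2)| := by
              rw [abs_div, abs_two] at hs1
              have hπ := Real.pi_pos
              calc 2 / π * |x - β| = 2 * (2 / π * (|x - β| / 2)) := by ring
                _ ≤ 2 * |Real.sin ((x - β) / 2)| := by linarith
            have hup : 2 * |Real.sin ((x - β) / 2)| ≤ |x - β| := by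
              have := Real.abs_sin_le_abs (x := (x - β) / 2)
              rw [abs_div, abs_two] at this
              linarith
            have hπ := Real.pi_pos
            have hApos : (0:ℝ) < 2 * |Real.sin ((x - β) / 2)| :=
              lt_of_lt_of_le (by positivity) hlow
            have l1 : Real.log (2 * |Real.sin ((x - β) / 2)|) ≤ Real.log |x - β| :=
              Real.log_le_log hApos hup
            have l2 : Real.log (2 / π * |x - β|) ≤ Real.log (2 * |Real.sin ((x - β) / 2)|) :=
              Real.log_le_log (by positivity) hlow
            have l3 : Real.log (2 / π * |x - β|) = Real.log (2 / π) + Real.log |x - β| :=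
              Real.log_mul (by positivity) (ne_of_gt hB)
            have l4 : Real.log (2 / π) = - Real.log (π / 2) := by
              rw [show (2:ℝ) / π = (π / 2)⁻¹ by field_simp, Real.log_inv]
            rw [abs_le]
            constructor
            · rw [l3, l4] at l2; linarith
            · linarith
      have := hdiff.add (ii_log_abs_sub β (β - π) (β + π))
      simpa using this
    exact hbase
  · -- |r| ≠ 1 : the function is continuous
    apply ContinuousOn.intervalIntegrable
    apply ContinuousOn.log hcont.continuousOn
    intro θ _
    intro h0
    rw [norm_eq_zero, sub_eq_zero] at h0
    apply habs
    rw [← h0, Complex.norm_exp_ofReal_mul_I]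

lemma ii_congr_ae {f g : ℝ → ℝ} {a b : ℝ} (h : f =ᵐ[volume] g)
    (hf : IntervalIntegrable f volume a b) : IntervalIntegrable g volume a b :=
  ⟨hf.1.congr (MeasureTheory.ae_restrict_of_ae h),
   hf.2.congr (MeasureTheory.ae_restrict_of_ae h)⟩

lemma countable_exp_fiber (w : ℂ) :
    Set.Countable {θ : ℝ | Complex.exp (θ * Complex.I) = w} := by
  by_cases h : ∃ θ₀ : ℝ, Complex.exp (θ₀ * Complex.I) = w
  · obtain ⟨θ₀, hθ₀⟩ := h
    apply Set.Countable.mono ?_ (Set.countable_range fun k : ℤ => θ₀ + 2 * π * k)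
    intro θ hθ
    simp only [Set.mem_setOf_eq] at hθ
    have h1 : Complex.exp ((θ - θ₀ : ℝ) * Complex.I) = 1 := by
      rw [show ((θ - θ₀ : ℝ) : ℂ) * Complex.I = θ * Complex.I - θ₀ * Complex.I by push_cast; ring,
        Complex.exp_sub, hθ, hθ₀, div_self]
      intro h2
      rw [h2] at hθ₀
      exact (Complex.exp_ne_zero _) (hθ₀.trans rfl) |>.elim
    rw [Complex.exp_eq_one_iff] at h1
    obtain ⟨n, hn⟩ := h1
    refine ⟨n, ?_⟩
    have h2 : ((θ - θ₀ : ℝ) : ℂ) * Complex.I = (((n : ℝ) * (2 * π) : ℝ) : ℂ) * Complex.I := by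
      rw [hn]; push_cast; ring
    have h3 : θ - θ₀ = (n : ℝ) * (2 * π) := by
      exact_mod_cast mul_right_cancel₀ Complex.I_ne_zero h2
    simp only []
    linarith
  · push_neg at h
    have : {θ : ℝ | Complex.exp (θ * Complex.I) = w} = ∅ := by
      ext θ; simpa using h θ
    rw [this]; exact Set.countable_empty

lemma ii_log_abs_multiset (a b : ℝ) (c : ℂ) (s : Multiset ℂ) :
    IntervalIntegrable (fun θ : ℝ =>
      Real.log (‖c * (s.map (fun r => Complex.exp (θ * Complex.I) - r)).prod‖))
      volume a b := by
  by_cases hc : c = 0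
  · simp only [hc, zero_mul, norm_zero, Real.log_zero]
    exact intervalIntegrable_const
  · induction s using Multiset.induction with
    | empty =>
      simp only [Multiset.map_zero, Multiset.prod_zero, mul_one]
      exact intervalIntegrable_const
    | cons r s ih =>
      have h1 := ih.add (ii_log_abs_exp_sub r a b)
      set E : Set ℝ := ⋃ w ∈ (r ::ₘ s).toFinset, {θ : ℝ | Complex.exp (θ * Complex.I) = w}
        with hE
      have hEc : Set.Countable E :=
        Set.Countable.biUnion ((r ::ₘ s).toFinset.countable_toSet)
          (fun w _ => countable_exp_fiber w)
      have heq : ∀ θ : ℝ, θ ∉ E →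
          Real.log (‖c * (s.map
              (fun x => Complex.exp (θ * Complex.I) - x)).prod‖)
            + Real.log (‖Complex.exp (θ * Complex.I) - r‖)
          = Real.log (‖c * ((r ::ₘ s).map
              (fun x => Complex.exp (θ * Complex.I) - x)).prod‖) := by
        intro θ hθ
        have hnz : ∀ w ∈ (r ::ₘ s), Complex.exp (θ * Complex.I) - w ≠ 0 := by
          intro w hw h0
          apply hθ
          rw [hE]
          refine Set.mem_biUnion (Multiset.mem_toFinset.2 hw) ?_
          simpa [sub_eq_zero] using h0
        have hprod : (s.map (fun x => Complex.exp (θ * Complex.I) - x)).prod ≠ 0 := by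
          apply Multiset.prod_ne_zero
          intro h0
          obtain ⟨w, hw, hw0⟩ := Multiset.mem_map.1 h0
          exact hnz w (Multiset.mem_cons_of_mem hw) hw0
        conv_rhs => rw [Multiset.map_cons, Multiset.prod_cons,
          show c * ((Complex.exp (θ * Complex.I) - r) *
            (s.map (fun x => Complex.exp (θ * Complex.I) - x)).prod)
          = (c * (s.map (fun x => Complex.exp (θ * Complex.I) - x)).prod)
            * (Complex.exp (θ * Complex.I) - r) by ring,
          norm_mul,
          Real.log_mul (norm_ne_zero_iff.mpr (mul_ne_zero hc hprod))
            (norm_ne_zero_iff.mpr (hnz r (Multiset.mem_cons_self r s)))]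
      have hae : (fun θ : ℝ =>
          Real.log (‖c * (s.map
            (fun x => Complex.exp (θ * Complex.I) - x)).prod‖)
          + Real.log (‖Complex.exp (θ * Complex.I) - r‖))
          =ᵐ[volume] (fun θ : ℝ => Real.log (‖c * ((r ::ₘ s).map
            (fun x => Complex.exp (θ * Complex.I) - x)).prod‖)) := by
        rw [Filter.EventuallyEq, MeasureTheory.ae_iff]
        apply MeasureTheory.measure_mono_null ?_ (hEc.measure_zero volume)
        intro θ hθ
        by_contra hmem
        exact hθ (heq θ hmem)
      exact ii_congr_ae hae h1

lemma ii_log_abs_poly (Q : Polynomial ℂ) (a b : ℝ) :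
    IntervalIntegrable (fun θ : ℝ =>
      Real.log (‖Q.eval (Complex.exp (θ * Complex.I))‖)) volume a b := by
  by_cases hQ : Q = 0
  · simp only [hQ, eval_zero, norm_zero, Real.log_zero]
    exact intervalIntegrable_const
  · have hfac := (IsAlgClosed.splits Q).eq_prod_roots
    have funeq : (fun θ : ℝ => Real.log (‖Q.eval (Complex.exp (θ * Complex.I))‖))
        = fun θ : ℝ => Real.log (‖Q.leadingCoeff *
            (Q.roots.map (fun r => Complex.exp (θ * Complex.I) - r)).prod‖) := by
      funext θ
      conv_lhs => rw [hfac]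
      rw [eval_mul, eval_C, eval_multiset_prod, Multiset.map_map]
      simp only [Function.comp, eval_sub, eval_X, eval_C]
    rw [funeq]
    exact ii_log_abs_multiset a b _ _

lemma log_abs_one_add_div (e w : ℂ) (habs : ‖e‖ = 1) (hw : w + e ≠ 0) :
    Real.log (‖1 + e / w‖) =
      Real.log (‖w + e‖) - Real.log (‖w‖) := by
  by_cases h : w = 0
  · simp [h, habs]
  · have h1 : 1 + e / w = (w + e) / w := by field_simp
    rw [h1, norm_div, Real.log_div (norm_ne_zero_iff.mpr hw) (norm_ne_zero_iff.mpr h)]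

lemma exp_per (θ : ℝ) :
    Complex.exp (((θ + 2 * π : ℝ)) * Complex.I) = Complex.exp (θ * Complex.I) := by
  push_cast
  rw [add_mul, Complex.exp_add, Complex.exp_two_pi_mul_I, mul_one]

lemma prod_add_nthRoots (N : ℕ) (hN : 0 < N) (w : ℂ) :
    ∏ ζ ∈ Polynomial.nthRootsFinset N (1 : ℂ), (w + ζ) = w ^ N - (-1) ^ N := by
  have hprim := Complex.isPrimitiveRoot_exp N (by omega)
  have hXpow := Polynomial.X_pow_sub_one_eq_prod hN hprim
  have h := congrArg (Polynomial.eval (-w)) hXpow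
  rw [eval_sub, eval_pow, eval_X, eval_one, eval_prod] at h
  simp only [eval_sub, eval_X, eval_C] at h
  have hcard : (Polynomial.nthRootsFinset N (1 : ℂ)).card = N := hprim.card_nthRootsFinset
  have h2 : ∏ ζ ∈ Polynomial.nthRootsFinset N (1 : ℂ), (-w - ζ)
      = (-1) ^ N * ∏ ζ ∈ Polynomial.nthRootsFinset N (1 : ℂ), (w + ζ) := by
    have e : ∏ ζ ∈ Polynomial.nthRootsFinset N (1 : ℂ), (-w - ζ)
        = ∏ ζ ∈ Polynomial.nthRootsFinset N (1 : ℂ), ((-1) * (w + ζ)) :=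
      Finset.prod_congr rfl (by intro ζ _; ring)
    rw [e, Finset.prod_mul_distrib, Finset.prod_const, hcard]
  rw [h2] at h
  have key : ((-1 : ℂ)) ^ N * ((-1 : ℂ)) ^ N = 1 := by
    rw [← mul_pow]
    norm_num
  have hneg : (-w) ^ N = (-1) ^ N * w ^ N := by
    rw [neg_pow]
  calc ∏ ζ ∈ Polynomial.nthRootsFinset N (1 : ℂ), (w + ζ)
      = ((-1 : ℂ)) ^ N * ((-1 : ℂ)) ^ N * ∏ ζ ∈ Polynomial.nthRootsFinset N (1 : ℂ), (w + ζ) := by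
        rw [key, one_mul]
    _ = (-1 : ℂ) ^ N * ((-w) ^ N - 1) := by rw [mul_assoc, ← h]
    _ = w ^ N - (-1) ^ N := by
        rw [hneg, mul_sub, ← mul_assoc, key, one_mul, mul_one]

set_option maxHeartbeats 1000000 in
theorem logMahler_rescale (P : Polynomial ℂ) (N : ℕ) (hN : 1 ≤ N)
    (hroots : ∀ z : ℂ, ‖z‖ = 1 → z * P.eval (z ^ N) + 1 ≠ 0) :
    logMahler (fun z => 1 + (-1) ^ (N + 1) / (z * (P.eval z) ^ N)) =
      N * logMahler (fun z => 1 + 1 / (z * P.eval (z ^ N))) := by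
  have hNne : N ≠ 0 := by omega
  have hNpos : 0 < N := hN
  have hN0 : (N : ℝ) ≠ 0 := Nat.cast_ne_zero.2 hNne
  by_cases hP : P = 0
  · have h1 : (fun z : ℂ => 1 + (-1) ^ (N + 1) / (z * (P.eval z) ^ N)) = fun _ => 1 := by
      funext z; simp [hP, zero_pow hNne]
    have h2 : (fun z : ℂ => 1 + 1 / (z * P.eval (z ^ N))) = fun _ => 1 := by
      funext z; simp [hP]
    rw [h1, h2]
    simp [logMahler]
  set Fn : ℂ → ℂ := fun z => 1 + (-1) ^ (N + 1) / (z * (P.eval z) ^ N) with hFn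
  set G : ℂ → ℂ := fun z => 1 + 1 / (z * P.eval (z ^ N)) with hG
  set μN := Polynomial.nthRootsFinset N (1 : ℂ) with hμN
  set q : Polynomial ℂ := X * P.comp (X ^ N) with hq
  have hqeval : ∀ z : ℂ, q.eval z = z * P.eval (z ^ N) := by
    intro z; simp [hq, eval_comp]
  have habs1 : ∀ θ : ℝ, ‖Complex.exp (θ * Complex.I)‖ = 1 := fun θ =>
    Complex.norm_exp_ofReal_mul_I θ
  have hmemN : ∀ ζ ∈ μN, ζ ^ N = 1 := fun ζ h => (Polynomial.mem_nthRootsFinset hNpos 1).1 h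
  have habsζ : ∀ ζ ∈ μN, ‖ζ‖ = 1 := by
    intro ζ h
    have h1 : ‖ζ‖ ^ N = 1 := by rw [← norm_pow, hmemN ζ h, norm_one]
    rcases pow_eq_one_iff_cases.mp h1 with h' | h' | ⟨h', _⟩
    · omega
    · exact h'
    · exfalso
      have := norm_nonneg ζ
      rw [h'] at this
      linarith
  have hGrot : ∀ ζ ∈ μN, ∀ z : ℂ, G (ζ * z) = 1 + 1 / (ζ * q.eval z) := by
    intro ζ hζ z
    rw [hG]
    simp only []
    rw [mul_pow, hmemN ζ hζ, one_mul, hqeval, mul_assoc]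
  have hne : ∀ ζ ∈ μN, ∀ z : ℂ, ‖z‖ = 1 → ζ * q.eval z + 1 ≠ 0 := by
    intro ζ hζ z hz
    have h1 := hroots (ζ * z) (by rw [norm_mul, habsζ ζ hζ, hz, one_mul])
    rw [mul_pow, hmemN ζ hζ, one_mul] at h1
    rw [hqeval, ← mul_assoc]
    exact h1
  have hGlog : ∀ ζ ∈ μN, ∀ θ : ℝ,
      Real.log (‖G (ζ * Complex.exp (θ * Complex.I))‖) =
        Real.log (‖(C ζ * q + 1).eval (Complex.exp (θ * Complex.I))‖)
          - Real.log (‖(C ζ * q).eval (Complex.exp (θ * Complex.I))‖) := by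
    intro ζ hζ θ
    rw [hGrot ζ hζ _]
    have hev1 : (C ζ * q + 1).eval (Complex.exp (θ * Complex.I))
        = ζ * q.eval (Complex.exp (θ * Complex.I)) + 1 := by simp
    have hev2 : (C ζ * q).eval (Complex.exp (θ * Complex.I))
        = ζ * q.eval (Complex.exp (θ * Complex.I)) := by simp
    rw [hev1, hev2]
    exact log_abs_one_add_div 1 _ (by simp) (hne ζ hζ _ (habs1 θ))
  have hgζ_int : ∀ ζ ∈ μN, ∀ a b : ℝ, IntervalIntegrable
      (fun θ : ℝ => Real.log (‖G (ζ * Complex.exp (θ * Complex.I))‖))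
      volume a b := by
    intro ζ hζ a b
    have he : (fun θ : ℝ => Real.log (‖G (ζ * Complex.exp (θ * Complex.I))‖))
        = fun θ : ℝ =>
          Real.log (‖(C ζ * q + 1).eval (Complex.exp (θ * Complex.I))‖)
            - Real.log (‖(C ζ * q).eval (Complex.exp (θ * Complex.I))‖) :=
      funext (fun θ => hGlog ζ hζ θ)
    rw [he]
    exact (ii_log_abs_poly _ a b).sub (ii_log_abs_poly _ a b)
  -- rotation invariance
  have hrot : ∀ ζ ∈ μN,
      (∫ θ in (0:ℝ)..(2*π), Real.log (‖G (ζ * Complex.exp (θ * Complex.I))‖))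
        = ∫ θ in (0:ℝ)..(2*π), Real.log (‖G (Complex.exp (θ * Complex.I))‖) := by
    intro ζ hζ
    have hζα : Complex.exp ((ζ.arg : ℂ) * Complex.I) = ζ := by
      have := Complex.norm_mul_exp_arg_mul_I ζ
      rwa [habsζ ζ hζ, Complex.ofReal_one, one_mul] at this
    have hshift : ∀ θ : ℝ, ζ * Complex.exp (θ * Complex.I)
        = Complex.exp (((θ + ζ.arg : ℝ)) * Complex.I) := by
      intro θ
      conv_lhs => rw [← hζα]
      rw [← Complex.exp_add]
      congr 1
      push_cast
      ring
    have hper : Function.Periodic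
        (fun t : ℝ => Real.log (‖G (Complex.exp (t * Complex.I))‖)) (2*π) := by
      intro t
      simp only [exp_per t]
    have step1 : (∫ θ in (0:ℝ)..(2*π), Real.log (‖G (ζ * Complex.exp (θ * Complex.I))‖))
        = ∫ θ in (0:ℝ)..(2*π), (fun t : ℝ =>
            Real.log (‖G (Complex.exp (t * Complex.I))‖)) (θ + ζ.arg) := by
      apply intervalIntegral.integral_congr
      intro θ _
      simp only [hshift θ]
    have step2 := intervalIntegral.integral_comp_add_right (a := (0:ℝ)) (b := 2*π)
      (fun t : ℝ => Real.log (‖G (Complex.exp (t * Complex.I))‖)) ζ.arg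
    have step3 : (∫ t in (0 + ζ.arg)..(2*π + ζ.arg),
          Real.log (‖G (Complex.exp (t * Complex.I))‖))
        = ∫ t in (0:ℝ)..(2*π), Real.log (‖G (Complex.exp (t * Complex.I))‖) := by
      have h4 := hper.intervalIntegral_add_eq ζ.arg 0
      rw [zero_add] at h4
      rw [zero_add, show 2*π + ζ.arg = ζ.arg + 2*π by ring]
      exact h4
    rw [step1, step2, step3]
  -- pointwise product identity
  have hprod_pt : ∀ z : ℂ, ‖z‖ = 1 →
      Real.log (‖Fn (z ^ N)‖)
        = ∑ ζ ∈ μN, Real.log (‖G (ζ * z)‖) := by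
    intro z hz
    set w : ℂ := z * P.eval (z ^ N) with hw
    have hwq : q.eval z = w := by rw [hqeval]
    have hFzN : Fn (z ^ N) = 1 + (-1) ^ (N+1) / w ^ N := by
      rw [hFn]
      simp only []
      rw [hw, mul_pow]
    by_cases hw0 : w = 0
    · have hall : ∀ ζ ∈ μN, G (ζ * z) = 1 := by
        intro ζ hζ
        rw [hGrot ζ hζ z, hwq, hw0, mul_zero, div_zero, add_zero]
      rw [hFzN, hw0, Finset.sum_congr rfl (fun ζ hζ => by rw [hall ζ hζ])]
      simp [zero_pow hNne]
    · have hGval : ∀ ζ ∈ μN, G (ζ * z) = (w + ζ⁻¹) / w := by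
        intro ζ hζ
        have hζ0 : ζ ≠ 0 := Polynomial.ne_zero_of_mem_nthRootsFinset one_ne_zero hζ
        rw [hGrot ζ hζ z, hwq]
        field_simp
      have hGne : ∀ ζ ∈ μN, G (ζ * z) ≠ 0 := by
        intro ζ hζ
        have hζ0 : ζ ≠ 0 := Polynomial.ne_zero_of_mem_nthRootsFinset one_ne_zero hζ
        rw [hGval ζ hζ]
        apply div_ne_zero ?_ hw0
        intro h0
        apply hne ζ hζ z hz
        rw [hwq]
        calc ζ * w + 1 = ζ * (w + ζ⁻¹) := by rw [mul_add, mul_inv_cancel₀ hζ0]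
          _ = 0 := by rw [h0, mul_zero]
      have hcard : μN.card = N := (Complex.isPrimitiveRoot_exp N hNne).card_nthRootsFinset
      have hinvmem : ∀ ζ ∈ μN, ζ⁻¹ ∈ μN := by
        intro ζ hζ
        rw [hμN, Polynomial.mem_nthRootsFinset hNpos 1]
        rw [inv_pow, hmemN ζ hζ, inv_one]
      have hinv : ∏ ζ ∈ μN, (w + ζ⁻¹) = ∏ ζ ∈ μN, (w + ζ) := by
        apply Finset.prod_nbij' (fun ζ => ζ⁻¹) (fun ζ => ζ⁻¹)
        · exact fun ζ hζ => hinvmem ζ hζ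
        · exact fun ζ hζ => hinvmem ζ hζ
        · intro ζ _; exact inv_inv ζ
        · intro ζ _; exact inv_inv ζ
        · intro ζ _; rfl
      have hprodG : ∏ ζ ∈ μN, G (ζ * z) = Fn (z ^ N) := by
        rw [Finset.prod_congr rfl (fun ζ hζ => hGval ζ hζ), Finset.prod_div_distrib,
          Finset.prod_const, hcard, hinv, prod_add_nthRoots N hNpos w, hFzN]
        have hwN : w ^ N ≠ 0 := pow_ne_zero N hw0
        field_simp
        ring
      rw [← hprodG, norm_prod, Real.log_prod]
      intro ζ hζ
      exact norm_ne_zero_iff.mpr (hGne ζ hζ)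
  -- composition with z ^ N
  have hcomp : ∀ θ : ℝ, (Complex.exp (θ * Complex.I)) ^ N
      = Complex.exp ((((N : ℝ) * θ : ℝ) : ℂ) * Complex.I) := by
    intro θ
    rw [← Complex.exp_nat_mul]
    congr 1
    push_cast
    ring
  set h : ℝ → ℝ := fun θ => Real.log (‖Fn (Complex.exp (θ * Complex.I))‖) with hh
  have hsum_eq : ∀ θ : ℝ, h ((N : ℝ) * θ)
      = ∑ ζ ∈ μN, Real.log (‖G (ζ * Complex.exp (θ * Complex.I))‖) := by
    intro θ
    have e : h ((N : ℝ) * θ)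
        = Real.log (‖Fn ((Complex.exp (θ * Complex.I)) ^ N)‖) := by
      rw [hh]
      simp only []
      rw [hcomp θ]
    rw [e]
    exact hprod_pt _ (habs1 θ)
  have hh_int : ∀ a b : ℝ, IntervalIntegrable h volume a b := by
    intro a b
    apply (IntervalIntegrable.comp_mul_left_iff (c := (N:ℝ)) hN0).mp
    have e : (fun θ : ℝ => h ((N : ℝ) * θ)) = fun θ : ℝ =>
        ∑ ζ ∈ μN, Real.log (‖G (ζ * Complex.exp (θ * Complex.I))‖) :=
      funext hsum_eq
    have hs := IntervalIntegrable.sum (μ := volume) (a := a/(N:ℝ)) (b := b/(N:ℝ)) μN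
      (f := fun ζ => fun θ : ℝ => Real.log (‖G (ζ * Complex.exp (θ * Complex.I))‖))
      (fun ζ hζ => hgζ_int ζ hζ _ _)
    have esum : (∑ ζ ∈ μN, fun θ : ℝ =>
          Real.log (‖G (ζ * Complex.exp (θ * Complex.I))‖))
        = fun θ : ℝ => ∑ ζ ∈ μN,
            Real.log (‖G (ζ * Complex.exp (θ * Complex.I))‖) := by
      funext θ
      simp [Finset.sum_apply]
    rw [e, ← esum]
    exact hs
  have hper : Function.Periodic h (2*π) := by
    intro t
    rw [hh]
    simp only [exp_per t]
  have e2 : ∫ x in (0:ℝ)..((N:ℝ)*(2*π)), h x = (N : ℝ) * ∫ x in (0:ℝ)..(2*π), h x := by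
    have := hper.intervalIntegral_add_zsmul_eq (N : ℤ) 0 hh_int
    rw [zero_add, zero_add] at this
    have ecast : ((N : ℤ) • (2*π) : ℝ) = (N:ℝ) * (2*π) := by
      rw [zsmul_eq_mul]; push_cast; ring
    rw [ecast] at this
    rw [this, zsmul_eq_mul]
    push_cast
    ring
  have e1 : ∫ θ in (0:ℝ)..(2*π), h ((N:ℝ)*θ)
      = (N:ℝ)⁻¹ * ∫ x in (0:ℝ)..((N:ℝ)*(2*π)), h x := by
    have := intervalIntegral.integral_comp_mul_left h (a := (0:ℝ)) (b := 2*π) hN0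
    rw [mul_zero] at this
    rw [this, smul_eq_mul]
  have e3 : ∫ θ in (0:ℝ)..(2*π), h ((N:ℝ)*θ)
      = ∑ ζ ∈ μN, ∫ θ in (0:ℝ)..(2*π),
          Real.log (‖G (ζ * Complex.exp (θ * Complex.I))‖) := by
    rw [intervalIntegral.integral_congr (g := fun θ =>
      ∑ ζ ∈ μN, Real.log (‖G (ζ * Complex.exp (θ * Complex.I))‖))
      (fun θ _ => hsum_eq θ)]
    exact intervalIntegral.integral_finset_sum (fun ζ hζ => hgζ_int ζ hζ 0 (2*π))
  have e4 : ∑ ζ ∈ μN, (∫ θ in (0:ℝ)..(2*π),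
        Real.log (‖G (ζ * Complex.exp (θ * Complex.I))‖))
      = (N : ℝ) * ∫ θ in (0:ℝ)..(2*π), Real.log (‖G (Complex.exp (θ * Complex.I))‖) := by
    rw [Finset.sum_congr rfl (fun ζ hζ => hrot ζ hζ), Finset.sum_const,
      (Complex.isPrimitiveRoot_exp N hNne).card_nthRootsFinset, nsmul_eq_mul]
  have key : ∫ θ in (0:ℝ)..(2*π), h θ
      = (N : ℝ) * ∫ θ in (0:ℝ)..(2*π), Real.log (‖G (Complex.exp (θ * Complex.I))‖) := by
    have c1 : ∫ θ in (0:ℝ)..(2*π), h ((N:ℝ)*θ) = ∫ θ in (0:ℝ)..(2*π), h θ := by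
      rw [e1, e2, ← mul_assoc, inv_mul_cancel₀ hN0, one_mul]
    rw [← c1, e3, e4]
  simp only [logMahler]
  rw [key]
  ring
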